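/- In any orthomodular lattice, if a commutes with b and a commutes with c (where a commutes with b means a = (a∩b)∪(a∩b')), then a ∩ (b∪c) = (a∩b) ∪ (a∩c). -/
import Mathlib


/-- An ortholattice as an algebra ⟨α, ', ∪, ∩⟩ with join `j` and
orthocomplement `c` primitive, and meet defined by De Morgan. -/
structure OrthoLattice (α : Type*) where
  j : α → α → α
  c : α → α
  j_comm : ∀ a b, j a b = j b a
  j_assoc : ∀ a b d, j (j a b) d = j a (j b d)
  c_invol : ∀ a, c (c a) = a
  j_top : ∀ a b, j a (j b (c b)) = j b (c b)
  absorb : ∀ a b, j a (c (j (c a) (c b))) = a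

namespace OrthoLattice

variable {α : Type*}

/-- meet: a ∩ b = (a' ∪ b')' -/
def m (L : OrthoLattice α) (a b : α) : α := L.c (L.j (L.c a) (L.c b))

/-- the unit 1 = a ∪ a' -/
def one (L : OrthoLattice α) (a : α) : α := L.j a (L.c a)

/-- quantum equivalence a ≡ b = (a∩b) ∪ (a'∩b') -/
def equiv (L : OrthoLattice α) (a b : α) : α := L.j (L.m a b) (L.m (L.c a) (L.c b))

/-- classical equivalence a ≡₀ b = (a'∪b) ∩ (a∪b') -/
def equiv0 (L : OrthoLattice α) (a b : α) : α := L.m (L.j (L.c a) b) (L.j a (L.c b))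

/-- Sasaki hook a →₁ b = a' ∪ (a ∩ b) -/
def sasaki (L : OrthoLattice α) (a b : α) : α := L.j (L.c a) (L.m a b)

end OrthoLattice

namespace OrthoLattice

variable {α : Type*} (L : OrthoLattice α)

/-- order relation -/
def le (a b : α) : Prop := L.j a b = b

variable {L}

lemma m_absorb (a b : α) : L.m a (L.j a b) = a := by
  have h := L.absorb (L.c a) (L.c b)
  rw [L.c_invol, L.c_invol] at h
  unfold m
  rw [h, L.c_invol]

lemma j_idem (a : α) : L.j a a = a := by
  have h := L.absorb a (L.j a a)
  have h2 : L.m a (L.j a a) = a := m_absorb a a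
  unfold m at h2
  rw [h2] at h
  exact h

lemma le_refl (a : α) : L.le a a := j_idem a

lemma le_trans {a b d : α} (h1 : L.le a b) (h2 : L.le b d) : L.le a d := by
  unfold le at *
  rw [← h2, ← L.j_assoc, h1]

lemma le_antisymm {a b : α} (h1 : L.le a b) (h2 : L.le b a) : a = b := by
  unfold le at *
  rw [← h2, L.j_comm, h1]

lemma le_j_left (a b : α) : L.le a (L.j a b) := by
  unfold le; rw [← L.j_assoc, j_idem]

lemma le_j_right (a b : α) : L.le b (L.j a b) := by
  unfold le
  rw [L.j_comm a b, ← L.j_assoc, j_idem]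

lemma j_le {a b x : α} (h1 : L.le a x) (h2 : L.le b x) : L.le (L.j a b) x := by
  unfold le at *
  rw [L.j_assoc, h2, h1]

lemma m_comm (a b : α) : L.m a b = L.m b a := by
  unfold m; rw [L.j_comm]

lemma m_eq_of_le {a b : α} (h : L.le a b) : L.m a b = a := by
  unfold le at h
  rw [← h]; exact m_absorb a b

lemma le_of_m_eq {a b : α} (h : L.m a b = a) : L.le a b := by
  have h2 := L.absorb b a
  have : L.m b a = a := by rw [m_comm]; exact h
  unfold m at this
  rw [this] at h2
  unfold le
  rw [L.j_comm]
  exact h2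

lemma c_m (a b : α) : L.c (L.m a b) = L.j (L.c a) (L.c b) := by
  unfold m; rw [L.c_invol]

lemma m_c (a b : α) : L.m (L.c a) (L.c b) = L.c (L.j a b) := by
  unfold m; rw [L.c_invol, L.c_invol]

lemma c_le {a b : α} (h : L.le a b) : L.le (L.c b) (L.c a) := by
  have h1 := m_eq_of_le h
  have h2 : L.j (L.c a) (L.c b) = L.c a := by rw [← c_m, h1]
  unfold le
  rw [L.j_comm, h2]

lemma le_m {x a b : α} (h1 : L.le x a) (h2 : L.le x b) : L.le x (L.m a b) := by
  have h3 : L.le (L.j (L.c a) (L.c b)) (L.c x) := j_le (c_le h1) (c_le h2)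
  have h4 := c_le h3
  rw [L.c_invol] at h4
  exact h4

lemma m_le_left (a b : α) : L.le (L.m a b) a := by
  have h := c_le (L := L) (le_j_left (L.c a) (L.c b))
  rw [L.c_invol] at h
  exact h

lemma m_le_right (a b : α) : L.le (L.m a b) b := by
  have h := c_le (L := L) (le_j_right (L.c a) (L.c b))
  rw [L.c_invol] at h
  exact h

lemma le_top (x b : α) : L.le x (L.j b (L.c b)) := L.j_top x b

/-- the zero relative to b -/
def zero (L : OrthoLattice α) (b : α) : α := L.c (L.j b (L.c b))

lemma zero_le (b x : α) : L.le (L.zero b) x := by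
  have h := c_le (L := L) (le_top (L.c x) b)
  rw [L.c_invol] at h
  exact h

lemma eq_zero {x z w : α} (h1 : L.le x z) (h2 : L.le x (L.c z)) : x = L.zero w := by
  have h3 : L.le x (L.m z (L.c z)) := le_m h1 h2
  have h4 : L.m z (L.c z) = L.zero z := by
    unfold m zero
    rw [L.c_invol, L.j_comm]
  rw [h4] at h3
  have h5 : L.zero z = L.zero w := le_antisymm (zero_le z (L.zero w)) (zero_le w (L.zero z))
  rw [h5] at h3
  exact le_antisymm h3 (zero_le w x)

lemma j_zero (e w : α) : L.j e (L.zero w) = e := by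
  have h := zero_le (L := L) w e
  unfold le at h
  rw [L.j_comm, h]

/-- orthomodular law in the usual order form -/
lemma om_le (hOM : ∀ a b : α, L.j a (L.m (L.c a) (L.j a b)) = L.j a b) {x y : α} (h : L.le x y) : y = L.j x (L.m y (L.c x)) := by
  have h1 := hOM x y
  unfold le at h
  rw [h] at h1
  rw [m_comm]
  exact h1.symm

/-- if q ≤ p' then (p ∪ q) ∩ p' = q -/
lemma lemA (hOM : ∀ a b : α, L.j a (L.m (L.c a) (L.j a b)) = L.j a b) {p q : α} (hq : L.le q (L.c p)) :
    L.m (L.j p q) (L.c p) = q := by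
  set y := L.m (L.j p q) (L.c p) with hy
  have hqy : L.le q y := le_m (le_j_right p q) hq
  have h1 : y = L.j q (L.m y (L.c q)) := om_le hOM hqy
  have h2 : L.m y (L.c q) = L.zero p := by
    apply eq_zero (z := L.j p q)
    · exact le_trans (m_le_left y (L.c q)) (m_le_left (L.j p q) (L.c p))
    · have ha : L.le (L.m y (L.c q)) (L.c p) :=
        le_trans (m_le_left y (L.c q)) (m_le_right (L.j p q) (L.c p))
      have hb : L.le (L.m y (L.c q)) (L.c q) := m_le_right y (L.c q)
      have hc : L.le (L.m y (L.c q)) (L.m (L.c p) (L.c q)) := le_m ha hb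
      rw [m_c] at hc
      exact hc
  rw [h2, j_zero] at h1
  exact h1

/-- if a commutes with b then a ∩ (a∩b)' = a ∩ b' -/
lemma lemB (hOM : ∀ a b : α, L.j a (L.m (L.c a) (L.j a b)) = L.j a b) {a b : α} (hc : a = L.j (L.m a b) (L.m a (L.c b))) :
    L.m a (L.c (L.m a b)) = L.m a (L.c b) := by
  have hcp : L.c (L.m a b) = L.j (L.c a) (L.c b) := c_m a b
  have hq : L.le (L.m a (L.c b)) (L.c (L.m a b)) := by
    rw [hcp]
    exact le_trans (m_le_right a (L.c b)) (le_j_right (L.c a) (L.c b))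
  have h := lemA hOM hq
  rw [← hc] at h
  exact h

end OrthoLattice

/-- in any orthomodular lattice, if a commutes with b and with c
then a ∩ (b∪c) = (a∩b) ∪ (a∩c). -/
theorem stmt18 {α : Type*} (L : OrthoLattice α)
    (hOM : ∀ a b : α, L.j a (L.m (L.c a) (L.j a b)) = L.j a b) :
    ∀ a b d : α,
      a = L.j (L.m a b) (L.m a (L.c b)) →
      a = L.j (L.m a d) (L.m a (L.c d)) →
      L.m a (L.j b d) = L.j (L.m a b) (L.m a d) := by
  intro a b d hb hd
  open OrthoLattice in
  set e := L.j (L.m a b) (L.m a d) with he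
  set f := L.m a (L.j b d) with hf
  have hef : L.le e f := by
    apply j_le
    · exact le_m (m_le_left a b) (le_trans (m_le_right a b) (le_j_left b d))
    · exact le_m (m_le_left a d) (le_trans (m_le_right a d) (le_j_right b d))
  set g := L.m f (L.c e) with hg
  have hgf : L.le g f := m_le_left f (L.c e)
  have hga : L.le g a := le_trans hgf (m_le_left a (L.j b d))
  have hce : L.c e = L.m (L.c (L.m a b)) (L.c (L.m a d)) := (m_c _ _).symm
  have hgce : L.le g (L.c e) := m_le_right f (L.c e)
  have hg1 : L.le g (L.c (L.m a b)) := by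
    rw [hce] at hgce
    exact le_trans hgce (m_le_left _ _)
  have hg2 : L.le g (L.c (L.m a d)) := by
    rw [hce] at hgce
    exact le_trans hgce (m_le_right _ _)
  have hgb : L.le g (L.c b) := by
    have := le_m hga hg1
    rw [lemB hOM hb] at this
    exact le_trans this (m_le_right a (L.c b))
  have hgd : L.le g (L.c d) := by
    have := le_m hga hg2
    rw [lemB hOM hd] at this
    exact le_trans this (m_le_right a (L.c d))
  have hgbd : L.le g (L.c (L.j b d)) := by
    have := le_m hgb hgd
    rw [m_c] at this
    exact this
  have hgbd' : L.le g (L.j b d) := le_trans hgf (m_le_right a (L.j b d))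
  have hg0 : g = L.zero a := eq_zero hgbd' hgbd
  have hfe : f = L.j e g := om_le hOM hef
  rw [hg0, j_zero] at hfe
  exact hfe
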